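/- Let λ₁ > 0, λ₂ > 0 and μ₂ ≥ 0 with λ₂ ≠ μ₂. For v ≥ 0 and j ≥ 1 set q_j(v) = (λ₂−μ₂)² e^{−(λ₂−μ₂)v} λ₂^{j−1} (1−e^{−(λ₂−μ₂)v})^{j−1} / (λ₂ − μ₂ e^{−(λ₂−μ₂)v})^{j+1} and p_j = λ₁ ∫₀^∞ e^{−λ₁ v} q_j(v) dv. Assume μ₂ > λ₂, or else μ₂ < λ₂ together with 2(λ₂−μ₂) < λ₁. Then Σ_{j≥1} j²·p_j − (Σ_{j≥1} j·p_j)² = ( 2λ₁λ₂/(λ₁ − 2(λ₂−μ₂)) − λ₁(λ₂+μ₂)/(λ₁ − (λ₂−μ₂)) ) / (λ₂−μ₂) − ( λ₁/(λ₁ − (λ₂−μ₂)) )². -/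

import Mathlib

open Filter Topology MeasureTheory

/-- `q_j(v)`, the probability that a linear birth-death process with birth rate
`λ₂`, death rate `μ₂` and initial state `1` is in state `j ≥ 1` at time `v`. -/
noncomputable def bdProb (lam2 mu2 : ℝ) (j : ℕ) (v : ℝ) : ℝ :=
  (lam2 - mu2) ^ 2 * Real.exp (-(lam2 - mu2) * v) * lam2 ^ (j - 1) *
    (1 - Real.exp (-(lam2 - mu2) * v)) ^ (j - 1) /
    (lam2 - mu2 * Real.exp (-(lam2 - mu2) * v)) ^ (j + 1)

/-- Limit in-degree distribution of the preferential attachment–detachment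
model: `p_j = λ₁ ∫₀^∞ e^(-λ₁ v) q_j(v) dv` for `j ≥ 1`. -/
noncomputable def limP (lam1 lam2 mu2 : ℝ) (j : ℕ) : ℝ :=
  lam1 * ∫ v in Set.Ioi (0:ℝ), Real.exp (-lam1 * v) * bdProb lam2 mu2 j v

open Set

lemma bd_facts {lam2 mu2 : ℝ} (hlam2 : 0 < lam2) (hmu2 : 0 ≤ mu2)
    (hcase : lam2 < mu2 ∨ mu2 < lam2) {v : ℝ} (hv : 0 < v) :
    (lam2 - mu2 * Real.exp (-(lam2 - mu2) * v)) ≠ 0 ∧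
    0 ≤ lam2 * (1 - Real.exp (-(lam2 - mu2) * v)) /
        (lam2 - mu2 * Real.exp (-(lam2 - mu2) * v)) ∧
    0 < (lam2 - mu2) * Real.exp (-(lam2 - mu2) * v) /
        (lam2 - mu2 * Real.exp (-(lam2 - mu2) * v)) := by
  set x := Real.exp (-(lam2 - mu2) * v) with hxdef
  have hx : 0 < x := Real.exp_pos _
  rcases hcase with h | h
  · -- lam2 < mu2 : x > 1, D < 0
    have hx1 : 1 < x := by
      rw [hxdef, Real.one_lt_exp_iff]
      nlinarith
    have hD : lam2 - mu2 * x < 0 := by nlinarith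
    refine ⟨ne_of_lt hD, ?_, ?_⟩
    · rw [div_nonneg_iff]
      right
      constructor <;> nlinarith
    · rw [div_pos_iff]
      right
      constructor <;> nlinarith
  · -- mu2 < lam2 : 0 < x < 1, D > 0
    have hx1 : x < 1 := by
      rw [hxdef, Real.exp_lt_one_iff]
      nlinarith
    have hD : 0 < lam2 - mu2 * x := by nlinarith
    refine ⟨ne_of_gt hD, div_nonneg (by nlinarith) hD.le, div_pos (by nlinarith) hD⟩

lemma bd_eq (lam2 mu2 v : ℝ)
    (hD : lam2 - mu2 * Real.exp (-(lam2 - mu2) * v) ≠ 0) (m : ℕ) :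
    bdProb lam2 mu2 (m + 1) v =
      ((lam2 - mu2) ^ 2 * Real.exp (-(lam2 - mu2) * v) /
          (lam2 - mu2 * Real.exp (-(lam2 - mu2) * v)) ^ 2) *
        (lam2 * (1 - Real.exp (-(lam2 - mu2) * v)) /
          (lam2 - mu2 * Real.exp (-(lam2 - mu2) * v))) ^ m := by
  unfold bdProb
  simp only [Nat.add_sub_cancel]
  rw [div_pow, mul_pow]
  field_simp
  ring


lemma integral_exp_neg_mul_Ioi_zero {b : ℝ} (hb : 0 < b) :
    ∫ v in Set.Ioi (0:ℝ), Real.exp (-b * v) = 1 / b := by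
  have hd : ∀ x ∈ Set.Ici (0:ℝ),
      HasDerivAt (fun v => -Real.exp (-b*v)/b) (Real.exp (-b*x)) x := by
    intro x _
    have h1 : HasDerivAt (fun v : ℝ => -b*v) (-b) x := by
      simpa using (hasDerivAt_id x).const_mul (-b)
    have h3 := (h1.exp.neg).div_const b
    rw [mul_neg, neg_neg, mul_div_assoc, div_self hb.ne', mul_one] at h3
    exact h3
  have hi : IntegrableOn (fun v => Real.exp (-b*v)) (Set.Ioi (0:ℝ)) :=
    exp_neg_integrableOn_Ioi 0 hb
  have ht : Tendsto (fun v => -Real.exp (-b*v)/b) atTop (𝓝 0) := by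
    have h1 : Tendsto (fun v : ℝ => b*v) atTop atTop :=
      tendsto_id.const_mul_atTop hb
    have h2 : Tendsto (fun v : ℝ => Real.exp (-(b*v))) atTop (𝓝 0) :=
      Real.tendsto_exp_neg_atTop_nhds_zero.comp h1
    have h3 := (h2.neg).div_const b
    simpa [neg_mul] using h3
  have := integral_Ioi_of_hasDerivAt_of_tendsto' hd hi ht
  rw [this]
  norm_num
  rw [neg_div, neg_neg, one_div]

lemma summable_geom_one'
 {r : ℝ} (h1 : |r| < 1) :
    Summable (fun n : ℕ => ((n:ℝ)+1) * r^n) := by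
  have hs1 : Summable (fun n : ℕ => (n:ℝ) * r^n) := by
    simpa using summable_pow_mul_geometric_of_norm_lt_one (R := ℝ) 1 (by simpa using h1)
  have hs0 : Summable (fun n : ℕ => r^n) := summable_geometric_of_norm_lt_one (by simpa using h1)
  simpa [add_mul] using hs1.add hs0

lemma summable_geom_two' {r : ℝ} (h1 : |r| < 1) :
    Summable (fun n : ℕ => ((n:ℝ)+1)^2 * r^n) := by
  have hs2 : Summable (fun n : ℕ => (n:ℝ)^2 * r^n) := by
    simpa using summable_pow_mul_geometric_of_norm_lt_one (R := ℝ) 2 (by simpa using h1)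
  have hs1 : Summable (fun n : ℕ => (n:ℝ) * r^n) := by
    simpa using summable_pow_mul_geometric_of_norm_lt_one (R := ℝ) 1 (by simpa using h1)
  have hs0 : Summable (fun n : ℕ => r^n) := summable_geometric_of_norm_lt_one (by simpa using h1)
  have := (hs2.add ((hs1.mul_left 2).add hs0))
  refine this.congr fun n => ?_
  ring

lemma tsum_geom_one {r : ℝ} (h0 : 0 ≤ r) (h1 : r < 1) :
    ∑' n : ℕ, ((n:ℝ)+1) * r^n = 1/(1-r)^2 := by
  have habs : |r| < 1 := by rwa [abs_of_nonneg h0]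
  have hs1 : Summable (fun n : ℕ => (n:ℝ) * r^n) := by
    simpa using summable_pow_mul_geometric_of_norm_lt_one (R := ℝ) 1 (by simpa using habs)
  have hs0 : Summable (fun n : ℕ => r^n) := summable_geometric_of_norm_lt_one (by simpa using habs)
  have h1r : (1:ℝ) - r ≠ 0 := by nlinarith
  calc ∑' n : ℕ, ((n:ℝ)+1) * r^n
      = ∑' n : ℕ, ((n:ℝ) * r^n + r^n) := by refine tsum_congr fun n => by ring
    _ = (∑' n : ℕ, (n:ℝ) * r^n) + ∑' n : ℕ, r^n := Summable.tsum_add hs1 hs0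
    _ = r/(1-r)^2 + (1-r)⁻¹ := by
        rw [tsum_coe_mul_geometric_of_norm_lt_one (by simpa using habs),
          tsum_geometric_of_lt_one h0 h1]
    _ = 1/(1-r)^2 := by field_simp; ring

lemma tsum_geom_two {r : ℝ} (h0 : 0 ≤ r) (h1 : r < 1) :
    ∑' n : ℕ, ((n:ℝ)+1)^2 * r^n = (1+r)/(1-r)^3 := by
  have habs : |r| < 1 := by rwa [abs_of_nonneg h0]
  have hs2 : Summable (fun n : ℕ => (n:ℝ)^2 * r^n) := by
    simpa using summable_pow_mul_geometric_of_norm_lt_one (R := ℝ) 2 (by simpa using habs)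
  have hU : Summable (fun n : ℕ => ((n:ℝ)+1)^2 * r^n) := summable_geom_two' habs
  have hs1 : Summable (fun n : ℕ => (n:ℝ) * r^n) := by
    simpa using summable_pow_mul_geometric_of_norm_lt_one (R := ℝ) 1 (by simpa using habs)
  have hs0 : Summable (fun n : ℕ => r^n) := summable_geometric_of_norm_lt_one (by simpa using habs)
  have h1r : (1:ℝ) - r ≠ 0 := by nlinarith
  set T := ∑' n : ℕ, (n:ℝ)^2 * r^n with hT
  set U := ∑' n : ℕ, ((n:ℝ)+1)^2 * r^n with hUdef
  have shift : T = r * U := by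
    rw [hT, Summable.tsum_eq_zero_add hs2]
    simp only [Nat.cast_zero, Nat.cast_add, Nat.cast_one]
    rw [← tsum_mul_left]
    norm_num
    refine tsum_congr fun n => by ring
  have expand : U = T + (2 * (r/(1-r)^2) + (1-r)⁻¹) := by
    calc U = ∑' n : ℕ, ((n:ℝ)^2 * r^n + (2*((n:ℝ)*r^n) + r^n)) := by
          refine tsum_congr fun n => by ring
      _ = T + ((2 * ∑' n : ℕ, (n:ℝ)*r^n) + ∑' n : ℕ, r^n) := by
          rw [Summable.tsum_add hs2 ((hs1.mul_left 2).add hs0), Summable.tsum_add (hs1.mul_left 2) hs0,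
            tsum_mul_left]
      _ = T + (2 * (r/(1-r)^2) + (1-r)⁻¹) := by
          rw [tsum_coe_mul_geometric_of_norm_lt_one (by simpa using habs),
            tsum_geometric_of_lt_one h0 h1]
  have key : U * (1-r) = 2 * (r/(1-r)^2) + (1-r)⁻¹ := by
    rw [shift] at expand
    nlinarith [expand]
  have h2 : U = (2 * (r/(1-r)^2) + (1-r)⁻¹) / (1-r) := by
    field_simp at key ⊢
    linarith [key]
  rw [h2]
  field_simp
  ring

lemma hasSum_shift {f : ℕ → ℝ} {E : ℝ} (hf0 : f 0 = 0)
    (h : HasSum (fun n => f (n + 1)) E) : HasSum f E := by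
  have := (hasSum_nat_add_iff (f := f) 1).mp h
  simpa [hf0] using this

lemma bd_hasSum_one {lam2 mu2 : ℝ} (hlam2 : 0 < lam2) (hmu2 : 0 ≤ mu2)
    (hcase : lam2 < mu2 ∨ mu2 < lam2) {v : ℝ} (hv : 0 < v) :
    HasSum (fun j : ℕ => (j:ℝ) * bdProb lam2 mu2 j v)
      (Real.exp ((lam2 - mu2) * v)) := by
  obtain ⟨hD, hr0, hpos⟩ := bd_facts hlam2 hmu2 hcase hv
  have hbe := bd_eq lam2 mu2 v hD
  have hx : (0:ℝ) < Real.exp (-(lam2 - mu2) * v) := Real.exp_pos _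
  set a := lam2 - mu2 with hadef
  set x := Real.exp (-a * v) with hxdef
  set D := lam2 - mu2 * x with hDdef
  set r := lam2 * (1 - x) / D with hrdef
  set c := a ^ 2 * x / D ^ 2 with hcdef
  have ha : a ≠ 0 := by
    rcases hcase with h | h
    · exact ne_of_lt (by rw [hadef]; linarith)
    · exact ne_of_gt (by rw [hadef]; linarith)
  have h1r : 1 - r = a * x / D := by
    rw [hrdef]; field_simp; ring
  have hr1 : r < 1 := by
    have h2 : 0 < a * x / D := hpos
    rw [← h1r] at h2; linarith
  have habs : |r| < 1 := abs_lt.mpr ⟨by linarith, hr1⟩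
  have hxE : Real.exp (a * v) * x = 1 := by
    rw [hxdef, ← Real.exp_add]
    norm_num
  have hval : c * (1/(1-r)^2) = Real.exp (a * v) := by
    rw [h1r, hcdef]
    have hxne : x ≠ 0 := ne_of_gt hx
    field_simp
    nlinarith [hxE, sq_nonneg x, sq_nonneg a]
  have hgeom : HasSum (fun n : ℕ => c * (((n:ℝ)+1) * r^n)) (Real.exp (a * v)) := by
    have h2 := ((summable_geom_one' habs).hasSum).mul_left c
    rwa [tsum_geom_one hr0 hr1, hval] at h2
  apply hasSum_shift (by simp)
  convert hgeom using 1
  funext n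
  rw [hbe n]
  push_cast
  ring

lemma bd_hasSum_two {lam2 mu2 : ℝ} (hlam2 : 0 < lam2) (hmu2 : 0 ≤ mu2)
    (hcase : lam2 < mu2 ∨ mu2 < lam2) {v : ℝ} (hv : 0 < v) :
    HasSum (fun j : ℕ => (j:ℝ)^2 * bdProb lam2 mu2 j v)
      ((2 * lam2 * Real.exp ((lam2 - mu2) * v) ^ 2 -
        (lam2 + mu2) * Real.exp ((lam2 - mu2) * v)) / (lam2 - mu2)) := by
  obtain ⟨hD, hr0, hpos⟩ := bd_facts hlam2 hmu2 hcase hv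
  have hbe := bd_eq lam2 mu2 v hD
  have hx : (0:ℝ) < Real.exp (-(lam2 - mu2) * v) := Real.exp_pos _
  set a := lam2 - mu2 with hadef
  set x := Real.exp (-a * v) with hxdef
  set D := lam2 - mu2 * x with hDdef
  set r := lam2 * (1 - x) / D with hrdef
  set c := a ^ 2 * x / D ^ 2 with hcdef
  have ha : a ≠ 0 := by
    rcases hcase with h | h
    · exact ne_of_lt (by rw [hadef]; linarith)
    · exact ne_of_gt (by rw [hadef]; linarith)
  have h1r : 1 - r = a * x / D := by
    rw [hrdef]; field_simp; ring
  have hr1 : r < 1 := by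
    have h2 : 0 < a * x / D := hpos
    rw [← h1r] at h2; linarith
  have habs : |r| < 1 := abs_lt.mpr ⟨by linarith, hr1⟩
  have hEinv : Real.exp (a * v) = x⁻¹ := by
    rw [hxdef, ← Real.exp_neg]
    norm_num
  have hxne : x ≠ 0 := ne_of_gt hx
  have hD' : D ≠ 0 := hD
  rw [hDdef] at hD'
  have ha' : a ≠ 0 := ha
  rw [hadef] at ha'
  have hval : c * ((1+r)/(1-r)^3) =
      (2 * lam2 * Real.exp (a * v) ^ 2 - (lam2 + mu2) * Real.exp (a * v)) / a := by
    rw [hEinv, h1r, hcdef, hrdef, hDdef, hadef]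
    field_simp
    ring
  have hgeom : HasSum (fun n : ℕ => c * (((n:ℝ)+1)^2 * r^n))
      ((2 * lam2 * Real.exp (a * v) ^ 2 - (lam2 + mu2) * Real.exp (a * v)) / a) := by
    have h2 := ((summable_geom_two' habs).hasSum).mul_left c
    rwa [tsum_geom_two hr0 hr1, hval] at h2
  apply hasSum_shift (by simp)
  convert hgeom using 1
  funext n
  rw [hbe n]
  push_cast
  ring


lemma bd_nonneg {lam2 mu2 : ℝ} (hlam2 : 0 < lam2) (hmu2 : 0 ≤ mu2)
    (hcase : lam2 < mu2 ∨ mu2 < lam2) {v : ℝ} (hv : 0 < v) (m : ℕ) :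
    0 ≤ bdProb lam2 mu2 (m + 1) v := by
  obtain ⟨hD, hr0, hpos⟩ := bd_facts hlam2 hmu2 hcase hv
  rw [bd_eq lam2 mu2 v hD m]
  have hc : 0 ≤ (lam2 - mu2) ^ 2 * Real.exp (-(lam2 - mu2) * v) /
      (lam2 - mu2 * Real.exp (-(lam2 - mu2) * v)) ^ 2 := by positivity
  exact mul_nonneg hc (pow_nonneg hr0 m)

lemma bd_contOn {lam2 mu2 : ℝ} (hlam2 : 0 < lam2) (hmu2 : 0 ≤ mu2)
    (hcase : lam2 < mu2 ∨ mu2 < lam2) (j : ℕ) :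
    ContinuousOn (fun v => bdProb lam2 mu2 j v) (Set.Ioi (0:ℝ)) := by
  unfold bdProb
  apply ContinuousOn.div
  · apply Continuous.continuousOn
    fun_prop
  · apply Continuous.continuousOn
    fun_prop
  · intro v hv
    exact pow_ne_zero _ (bd_facts hlam2 hmu2 hcase hv).1

lemma key_swap {lam1 lam2 mu2 : ℝ} (hlam1 : 0 < lam1) (hlam2 : 0 < lam2)
    (hmu2 : 0 ≤ mu2) (hcase : lam2 < mu2 ∨ mu2 < lam2)
    (w : ℕ → ℝ) (hw : ∀ j, 0 ≤ w j) (hw0 : w 0 = 0) (g : ℝ → ℝ)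
    (hg : ∀ v, 0 < v → HasSum (fun j => w j * bdProb lam2 mu2 j v) (g v))
    (hgi : IntegrableOn (fun v => Real.exp (-lam1*v) * g v) (Set.Ioi (0:ℝ))) :
    ∑' j : ℕ, w j * limP lam1 lam2 mu2 j =
      lam1 * ∫ v in Set.Ioi (0:ℝ), Real.exp (-lam1*v) * g v := by
  set F : ℕ → ℝ → ℝ := fun j v => w j * (Real.exp (-lam1*v) * bdProb lam2 mu2 j v) with hF
  have hFnn : ∀ j : ℕ, ∀ v ∈ Set.Ioi (0:ℝ), 0 ≤ F j v := by
    intro j v hv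
    cases j with
    | zero => simp [hF, hw0]
    | succ m =>
      exact mul_nonneg (hw _) (mul_nonneg (Real.exp_nonneg _)
        (bd_nonneg hlam2 hmu2 hcase hv m))
  have hFsum : ∀ v ∈ Set.Ioi (0:ℝ), HasSum (fun j => F j v) (Real.exp (-lam1*v) * g v) := by
    intro v hv
    have h2 := (hg v hv).mul_left (Real.exp (-lam1*v))
    have hfe : (fun j => F j v) = fun i => Real.exp (-lam1 * v) * (w i * bdProb lam2 mu2 i v) := by
      funext j
      simp only [hF]
      ring
    rw [hfe]; exact h2
  have hFmeas : ∀ j : ℕ, AEStronglyMeasurable (F j) (volume.restrict (Set.Ioi (0:ℝ))) := by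
    intro j
    have hc : ContinuousOn (F j) (Set.Ioi (0:ℝ)) := by
      apply ContinuousOn.mul continuousOn_const
      exact ((Real.continuous_exp.comp (continuous_const.mul continuous_id)).continuousOn).mul
        (bd_contOn hlam2 hmu2 hcase j)
    exact hc.aestronglyMeasurable measurableSet_Ioi
  have hlint : ∀ j : ℕ, ∫⁻ v in Set.Ioi (0:ℝ), ‖F j v‖₊ =
      ∫⁻ v in Set.Ioi (0:ℝ), ENNReal.ofReal (F j v) := by
    intro j
    apply setLIntegral_congr_fun measurableSet_Ioi
    exact fun v hv => Real.enorm_eq_ofReal (hFnn j v hv)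
  have hfin : (∑' j : ℕ, ∫⁻ v in Set.Ioi (0:ℝ), ‖F j v‖₊) ≠ ⊤ := by
    have e1 : (∑' j : ℕ, ∫⁻ v in Set.Ioi (0:ℝ), ‖F j v‖₊) =
        ∫⁻ v in Set.Ioi (0:ℝ), ∑' j : ℕ, ENNReal.ofReal (F j v) := by
      exact (tsum_congr hlint).trans
        (lintegral_tsum fun j => ((hFmeas j).aemeasurable).ennreal_ofReal).symm
    have e2 : (∫⁻ v in Set.Ioi (0:ℝ), ∑' j : ℕ, ENNReal.ofReal (F j v)) =
        ∫⁻ v in Set.Ioi (0:ℝ), ENNReal.ofReal (Real.exp (-lam1*v) * g v) := by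
      apply setLIntegral_congr_fun measurableSet_Ioi
      refine fun v hv => ?_
      dsimp only
      rw [← ENNReal.ofReal_tsum_of_nonneg (fun j => hFnn j v hv) (hFsum v hv).summable,
        (hFsum v hv).tsum_eq]
    rw [e1, e2]
    have e3 : (∫⁻ v in Set.Ioi (0:ℝ), ENNReal.ofReal (Real.exp (-lam1*v) * g v)) ≤
        ∫⁻ v in Set.Ioi (0:ℝ), ‖Real.exp (-lam1*v) * g v‖₊ :=
      lintegral_ofReal_le_lintegral_enorm _
    exact ne_of_lt (lt_of_le_of_lt e3 hgi.2)
  have hswap := integral_tsum hFmeas hfin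
  have hterm : ∀ j : ℕ, w j * limP lam1 lam2 mu2 j =
      lam1 * ∫ v in Set.Ioi (0:ℝ), F j v := by
    intro j
    rw [limP, hF]
    rw [integral_const_mul]
    ring
  calc ∑' j : ℕ, w j * limP lam1 lam2 mu2 j
      = ∑' j : ℕ, lam1 * ∫ v in Set.Ioi (0:ℝ), F j v := tsum_congr hterm
    _ = lam1 * ∑' j : ℕ, ∫ v in Set.Ioi (0:ℝ), F j v := tsum_mul_left
    _ = lam1 * ∫ v in Set.Ioi (0:ℝ), ∑' j : ℕ, F j v := by rw [← hswap]
    _ = lam1 * ∫ v in Set.Ioi (0:ℝ), Real.exp (-lam1*v) * g v := by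
        congr 1
        apply setIntegral_congr_fun measurableSet_Ioi
        exact fun v hv => (hFsum v hv).tsum_eq

/-- Variance of the limit in-degree distribution: if `μ₂ > λ₂`, or
`μ₂ < λ₂` and `2(λ₂-μ₂) < λ₁`, then
`∑_{j≥1} j² p_j - (∑_{j≥1} j p_j)² =
  (2λ₁λ₂/(λ₁-2(λ₂-μ₂)) - λ₁(λ₂+μ₂)/(λ₁-(λ₂-μ₂)))/(λ₂-μ₂) - (λ₁/(λ₁-(λ₂-μ₂)))²`. -/
theorem variance_of_degree (lam1 lam2 mu2 : ℝ)
    (hlam1 : 0 < lam1) (hlam2 : 0 < lam2) (hmu2 : 0 ≤ mu2)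
    (hcase : lam2 < mu2 ∨ (mu2 < lam2 ∧ 2 * (lam2 - mu2) < lam1)) :
    (∑' j : ℕ, (j : ℝ) ^ 2 * limP lam1 lam2 mu2 j) -
        (∑' j : ℕ, (j : ℝ) * limP lam1 lam2 mu2 j) ^ 2 =
      (2 * lam1 * lam2 / (lam1 - 2 * (lam2 - mu2)) -
          lam1 * (lam2 + mu2) / (lam1 - (lam2 - mu2))) / (lam2 - mu2) -
        (lam1 / (lam1 - (lam2 - mu2))) ^ 2 := by
  have hne : lam2 < mu2 ∨ mu2 < lam2 := by
    rcases hcase with h | h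
    · exact Or.inl h
    · exact Or.inr h.1
  have hb1 : 0 < lam1 - (lam2 - mu2) := by
    rcases hcase with h | h
    · linarith
    · linarith [h.2]
  have hb2 : 0 < lam1 - 2 * (lam2 - mu2) := by
    rcases hcase with h | h
    · linarith
    · linarith [h.2]
  have ha : lam2 - mu2 ≠ 0 := by
    rcases hne with h | h
    · exact ne_of_lt (by linarith)
    · exact ne_of_gt (by linarith)
  -- first moment
  have hgeq1 : Set.EqOn (fun v => Real.exp (-lam1*v) * Real.exp ((lam2-mu2)*v))
      (fun v => Real.exp (-(lam1 - (lam2-mu2)) * v)) (Set.Ioi (0:ℝ)) := by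
    intro v _
    simp only [← Real.exp_add]
    congr 1
    ring
  have hgi1 : IntegrableOn (fun v => Real.exp (-lam1*v) * Real.exp ((lam2-mu2)*v))
      (Set.Ioi (0:ℝ)) :=
    (exp_neg_integrableOn_Ioi 0 hb1).congr_fun hgeq1.symm measurableSet_Ioi
  have ht1 : ∑' j : ℕ, (j:ℝ) * limP lam1 lam2 mu2 j =
      lam1 * (1 / (lam1 - (lam2 - mu2))) := by
    have h := key_swap hlam1 hlam2 hmu2 hne (fun j => (j:ℝ))
      (fun j => Nat.cast_nonneg j) (by simp)
      (fun v => Real.exp ((lam2-mu2)*v))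
      (fun v hv => bd_hasSum_one hlam2 hmu2 hne hv) hgi1
    rw [h]
    congr 1
    rw [setIntegral_congr_fun measurableSet_Ioi hgeq1]
    exact integral_exp_neg_mul_Ioi_zero hb1
  -- second moment
  set g2 : ℝ → ℝ := fun v =>
    (2 * lam2 * Real.exp ((lam2 - mu2) * v) ^ 2 -
      (lam2 + mu2) * Real.exp ((lam2 - mu2) * v)) / (lam2 - mu2) with hg2def
  have hgeq2 : Set.EqOn (fun v => Real.exp (-lam1*v) * g2 v)
      (fun v => (2*lam2/(lam2-mu2)) * Real.exp (-(lam1 - 2*(lam2-mu2)) * v) -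
        ((lam2+mu2)/(lam2-mu2)) * Real.exp (-(lam1 - (lam2-mu2)) * v)) (Set.Ioi (0:ℝ)) := by
    intro v _
    have e1 : Real.exp (-(lam1 - 2*(lam2-mu2))*v) =
        Real.exp (-lam1*v) * Real.exp ((lam2-mu2)*v) ^ 2 := by
      rw [sq, ← Real.exp_add, ← Real.exp_add]
      congr 1
      ring
    have e2 : Real.exp (-(lam1 - (lam2-mu2))*v) =
        Real.exp (-lam1*v) * Real.exp ((lam2-mu2)*v) := by
      rw [← Real.exp_add]
      congr 1
      ring
    simp only [hg2def, e1, e2]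
    field_simp
  have hint2a : IntegrableOn
      (fun v => (2*lam2/(lam2-mu2)) * Real.exp (-(lam1 - 2*(lam2-mu2)) * v))
      (Set.Ioi (0:ℝ)) := (exp_neg_integrableOn_Ioi 0 hb2).const_mul _
  have hint2b : IntegrableOn
      (fun v => ((lam2+mu2)/(lam2-mu2)) * Real.exp (-(lam1 - (lam2-mu2)) * v))
      (Set.Ioi (0:ℝ)) := (exp_neg_integrableOn_Ioi 0 hb1).const_mul _
  have hgi2 : IntegrableOn (fun v => Real.exp (-lam1*v) * g2 v) (Set.Ioi (0:ℝ)) := by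
    apply (hint2a.sub hint2b).congr
    refine (ae_restrict_iff' measurableSet_Ioi).mpr (ae_of_all _ fun v hv => ?_)
    exact (hgeq2 hv).symm
  have ht2 : ∑' j : ℕ, (j:ℝ)^2 * limP lam1 lam2 mu2 j =
      lam1 * ((2*lam2/(lam2-mu2)) * (1/(lam1 - 2*(lam2-mu2))) -
        ((lam2+mu2)/(lam2-mu2)) * (1/(lam1 - (lam2-mu2)))) := by
    have h := key_swap hlam1 hlam2 hmu2 hne (fun j => (j:ℝ)^2)
      (fun j => by positivity) (by simp) g2
      (fun v hv => bd_hasSum_two hlam2 hmu2 hne hv) hgi2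
    rw [h]
    congr 1
    rw [setIntegral_congr_fun measurableSet_Ioi hgeq2, integral_sub hint2a hint2b,
      integral_const_mul, integral_const_mul, integral_exp_neg_mul_Ioi_zero hb2,
      integral_exp_neg_mul_Ioi_zero hb1]
  rw [ht1, ht2]
  have h1 : lam1 - (lam2 - mu2) ≠ 0 := ne_of_gt hb1
  have h2 : lam1 - 2 * (lam2 - mu2) ≠ 0 := ne_of_gt hb2
  field_simp
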